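/- The operator norm of Dv1(z), where v1(x,y) = (x²+y²)(x, -y), equals exactly 3(x² + y²) for every z = (x, y) ∈ ℝ². -/

import Mathlib

noncomputable def Lmap (x y : ℝ) : EuclideanSpace ℝ (Fin 2) →L[ℝ] EuclideanSpace ℝ (Fin 2) :=
  LinearMap.toContinuousLinearMap
  { toFun := fun w => WithLp.toLp 2 ![(3*x^2+y^2) * w 0 + 2*x*y * w 1, -(2*x*y * w 0 + (x^2+3*y^2) * w 1)]
    map_add' := by
      intro a b
      ext i
      fin_cases i <;> simp [PiLp.add_apply] <;> ring
    map_smul' := by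
      intro c a
      ext i
      fin_cases i <;> simp [PiLp.smul_apply, smul_eq_mul] <;> ring }

@[simp] lemma Lmap_apply (x y : ℝ) (w : EuclideanSpace ℝ (Fin 2)) (i : Fin 2) :
    Lmap x y w i = ![(3*x^2+y^2) * w 0 + 2*x*y * w 1, -(2*x*y * w 0 + (x^2+3*y^2) * w 1)] i := rfl

theorem stmt_11
    (v1 : EuclideanSpace ℝ (Fin 2) → EuclideanSpace ℝ (Fin 2))
    (hv1 : v1 = fun (z : EuclideanSpace ℝ (Fin 2)) => WithLp.toLp 2 ![(z 0 ^ 2 + z 1 ^ 2) * z 0, -((z 0 ^ 2 + z 1 ^ 2) * z 1)])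
    (z : EuclideanSpace ℝ (Fin 2)) :
    ‖fderiv ℝ v1 z‖ = 3 * (z 0 ^ 2 + z 1 ^ 2) := by
  have key : HasStrictFDerivAt v1 (Lmap (z 0) (z 1)) z := by
    rw [hv1]
    apply (hasStrictFDerivAt_piLp 2).mpr
    intro i
    have h0 := PiLp.hasStrictFDerivAt_apply (𝕜 := ℝ) (E := fun _ : Fin 2 => ℝ) 2 z 0
    have h1 := PiLp.hasStrictFDerivAt_apply (𝕜 := ℝ) (E := fun _ : Fin 2 => ℝ) 2 z 1
    fin_cases i
    · show HasStrictFDerivAt (fun w : EuclideanSpace ℝ (Fin 2) => (w 0 ^ 2 + w 1 ^ 2) * w 0)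
        ((PiLp.proj (𝕜 := ℝ) 2 (fun _ : Fin 2 => ℝ) 0).comp (Lmap (z 0) (z 1))) z
      simp only [pow_two]
      exact (((h0.mul h0).add (h1.mul h1)).mul h0).congr_fderiv (by
        ext w
        simp [Lmap, ContinuousLinearMap.comp_apply, ContinuousLinearMap.add_apply,
          ContinuousLinearMap.smul_apply, PiLp.proj_apply, smul_eq_mul]
        ring)
    · show HasStrictFDerivAt (fun w : EuclideanSpace ℝ (Fin 2) => -((w 0 ^ 2 + w 1 ^ 2) * w 1))
        ((PiLp.proj (𝕜 := ℝ) 2 (fun _ : Fin 2 => ℝ) 1).comp (Lmap (z 0) (z 1))) z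
      simp only [pow_two]
      exact ((((h0.mul h0).add (h1.mul h1)).mul h1).neg).congr_fderiv (by
        ext w
        simp [Lmap, ContinuousLinearMap.comp_apply, ContinuousLinearMap.add_apply,
          ContinuousLinearMap.smul_apply, PiLp.proj_apply, smul_eq_mul]
        ring)
  rw [key.hasFDerivAt.fderiv]
  set x := z 0 with hx
  set y := z 1 with hy
  have hr : (0:ℝ) ≤ x^2 + y^2 := by positivity
  have hnorm : ∀ w : EuclideanSpace ℝ (Fin 2), ‖w‖ = Real.sqrt (w 0 ^ 2 + w 1 ^ 2) := by
    intro w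
    rw [EuclideanSpace.norm_eq]
    simp [Fin.sum_univ_two, sq_abs]
  apply le_antisymm
  · apply ContinuousLinearMap.opNorm_le_bound _ (by positivity)
    intro w
    rw [hnorm, hnorm]
    have h1 : (Lmap x y w 0)^2 + (Lmap x y w 1)^2 ≤ (3*(x^2+y^2))^2 * (w 0 ^2 + w 1^2) := by
      simp only [Lmap_apply, Matrix.cons_val_zero, Matrix.cons_val_one, Matrix.head_cons]
      nlinarith [sq_nonneg (y * w 0 - x * w 1), sq_nonneg (x^2+y^2), sq_nonneg (w 0), sq_nonneg (w 1)]
    calc Real.sqrt (Lmap x y w 0 ^ 2 + Lmap x y w 1 ^ 2)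
        ≤ Real.sqrt ((3*(x^2+y^2))^2 * (w 0 ^2 + w 1^2)) := Real.sqrt_le_sqrt h1
      _ = 3*(x^2+y^2) * Real.sqrt (w 0 ^2 + w 1^2) := by
          rw [Real.sqrt_mul (by positivity), Real.sqrt_sq (by positivity)]
  · by_cases hz : x^2 + y^2 = 0
    · rw [hz]; simp [norm_nonneg]
    · have hzpos : 0 < x^2 + y^2 := lt_of_le_of_ne hr (Ne.symm hz)
      have hLz : ‖Lmap x y z‖ = 3*(x^2+y^2) * ‖z‖ := by
        rw [hnorm, hnorm]
        have e0 : Lmap x y z 0 = 3*(x^2+y^2) * x := by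
          simp only [Lmap_apply, Matrix.cons_val_zero, ← hx, ← hy]; ring
        have e1 : Lmap x y z 1 = -(3*(x^2+y^2) * y) := by
          simp only [Lmap_apply, Matrix.cons_val_one, Matrix.head_cons, Matrix.cons_val_zero, ← hx, ← hy]; ring
        rw [e0, e1,
          show (3*(x^2+y^2)*x)^2 + (-(3*(x^2+y^2)*y))^2 = (3*(x^2+y^2))^2 * (x^2+y^2) by ring,
          Real.sqrt_mul (by positivity), Real.sqrt_sq (by positivity)]
      have hzn : 0 < ‖z‖ := by
        rw [hnorm]
        positivity
      have := (Lmap x y).le_opNorm z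
      rw [hLz] at this
      exact le_of_mul_le_mul_right this hzn
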